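/- Consider the inner moment problem: maximize ∫_S f dP over probability measures P on a compact set S ⊆ ℝ^n subject to μ_j − ε_j ≤ ∫_S ξ_j dP ≤ μ_j + ε_j for j = 1,…,n, where f is continuous. If there exists a feasible P (Slater-type condition with ε_j > 0 and μ ∈ int(conv(S))), then the optimal value equals the dual value: min over α ∈ ℝ, β¹, β² ≥ 0 of α + Σ_j (β¹_j(μ_j+ε_j) − β²_j(μ_j−ε_j)) subject to α + Σ_j (β¹_j − β²_j) ξ_j ≥ f(ξ) for all ξ ∈ S. -/

import Mathlib

open MeasureTheory

section Aux

variable {n : ℕ}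

/-- arithmetic helper: strict convex combination bound -/
private lemma aux_abs_comb {x y e a b : ℝ} (hx : |x| < e) (hy : |y| < e)
    (ha : 0 ≤ a) (hb : 0 ≤ b) (hab : a + b = 1) : |a * x + b * y| < e := by
  calc |a * x + b * y| ≤ |a * x| + |b * y| := abs_add_le _ _
    _ = a * |x| + b * |y| := by rw [abs_mul, abs_mul, abs_of_nonneg ha, abs_of_nonneg hb]
    _ < e := by
      rcases ha.eq_or_lt with h | h
      · have hb1 : b = 1 := by linarith
        rw [← h, hb1]; simpa using hy
      · calc a * |x| + b * |y| < a * e + b * e :=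
              add_lt_add_of_lt_of_le (mul_lt_mul_of_pos_left hx h)
                (mul_le_mul_of_nonneg_left hy.le hb)
          _ = e := by rw [← add_mul, hab, one_mul]

private lemma aux_lt_comb {x y v a b : ℝ} (hx : v < x) (hy : v < y)
    (ha : 0 ≤ a) (hb : 0 ≤ b) (hab : a + b = 1) : v < a * x + b * y := by
  rcases ha.eq_or_lt with h | h
  · have hb1 : b = 1 := by linarith
    rw [← h, hb1]; simpa using hy
  · calc v = a * v + b * v := by rw [← add_mul, hab, one_mul]
      _ < a * x + b * y :=
        add_lt_add_of_lt_of_le (mul_lt_mul_of_pos_left hx h)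
          (mul_le_mul_of_nonneg_left hy.le hb)

/-- Integrability of a continuous function w.r.t. a probability measure carried
by a compact set. -/
private lemma aux_integrable {S : Set (Fin n → ℝ)} (hS : IsCompact S)
    {P : Measure (Fin n → ℝ)} [IsProbabilityMeasure P] (hP : P Sᶜ = 0)
    {g : (Fin n → ℝ) → ℝ} (hg : Continuous g) : Integrable g P := by
  obtain ⟨C, hC⟩ := hS.exists_bound_of_continuousOn hg.continuousOn
  refine Integrable.mono' (integrable_const C) hg.aestronglyMeasurable ?_
  rw [Filter.eventually_iff, mem_ae_iff]
  refine measure_mono_null (fun x hx => ?_) hP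
  intro hxS
  exact hx (hC x hxS)

/-- A point of the convex hull of the graph of `f` over `S` is realized as
the moment vector and integral of a (finitely supported) probability measure. -/
private lemma aux_comb {S : Set (Fin n → ℝ)}
    (hS : IsCompact S) {f : (Fin n → ℝ) → ℝ} (hf : Continuous f) {p : (Fin n → ℝ) × ℝ}
    (hp : p ∈ convexHull ℝ ((fun ξ => (ξ, f ξ)) '' S)) :
    ∃ P : Measure (Fin n → ℝ), IsProbabilityMeasure P ∧ P Sᶜ = 0 ∧
      (∀ j, ∫ ξ, ξ j ∂P = p.1 j) ∧ ∫ ξ, f ξ ∂P = p.2 := by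
  rw [convexHull_eq] at hp
  obtain ⟨ι, t, w, z, hw0, hw1, hzS, hcm⟩ := hp
  rw [Finset.centerMass_eq_of_sum_1 _ _ hw1] at hcm
  set x : ι → (Fin n → ℝ) := fun i => (z i).1 with hxdef
  have hxS : ∀ i ∈ t, x i ∈ S := by
    intro i hi
    obtain ⟨ξ, hξ, hz⟩ := hzS i hi
    rw [hxdef]; simp only [← hz]; exact hξ
  have hz2 : ∀ i ∈ t, (z i).2 = f (x i) := by
    intro i hi
    obtain ⟨ξ, hξ, hz⟩ := hzS i hi
    rw [hxdef]; simp only [← hz]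
  set P : Measure (Fin n → ℝ) := ∑ i ∈ t, ENNReal.ofReal (w i) • Measure.dirac (x i) with hPdef
  have happ : ∀ s : Set (Fin n → ℝ), MeasurableSet s →
      P s = ∑ i ∈ t, ENNReal.ofReal (w i) * (Measure.dirac (x i)) s := by
    intro s hs
    rw [hPdef]
    simp [Measure.finset_sum_apply, Measure.smul_apply, smul_eq_mul]
  have hPuniv : P Set.univ = 1 := by
    rw [happ _ MeasurableSet.univ]
    simp only [measure_univ, mul_one]
    rw [← ENNReal.ofReal_sum_of_nonneg hw0, hw1, ENNReal.ofReal_one]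
  have hPprob : IsProbabilityMeasure P := ⟨hPuniv⟩
  have hP0 : P Sᶜ = 0 := by
    rw [happ _ hS.isClosed.measurableSet.compl]
    refine Finset.sum_eq_zero fun i hi => ?_
    rw [Measure.dirac_apply' _ hS.isClosed.measurableSet.compl,
      Set.indicator_of_notMem (by simpa using hxS i hi)]
    simp
  have hint : ∀ g : (Fin n → ℝ) → ℝ, Continuous g →
      ∫ ξ, g ξ ∂P = ∑ i ∈ t, w i * g (x i) := by
    intro g hg
    rw [hPdef, integral_finset_sum_measure (fun i _ => ?_)]
    · refine Finset.sum_congr rfl fun i hi => ?_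
      rw [integral_smul_measure, integral_dirac, ENNReal.toReal_ofReal (hw0 i hi), smul_eq_mul]
    · refine Integrable.smul_measure ?_ ENNReal.ofReal_ne_top
      refine ⟨hg.aestronglyMeasurable, ?_⟩
      simp [HasFiniteIntegral, lintegral_dirac]
  have hfst : ∀ j, p.1 j = ∑ i ∈ t, w i * x i j := by
    intro j
    have h1 : p.1 = ∑ i ∈ t, w i • x i := by
      rw [← hcm, Prod.fst_sum]
      exact Finset.sum_congr rfl fun i _ => rfl
    rw [h1, Finset.sum_apply]
    exact Finset.sum_congr rfl fun i _ => rfl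
  have hsnd : p.2 = ∑ i ∈ t, w i * (z i).2 := by
    rw [← hcm, Prod.snd_sum]
    exact Finset.sum_congr rfl fun i _ => rfl
  refine ⟨P, hPprob, hP0, fun j => ?_, ?_⟩
  · rw [hint _ (continuous_apply j), hfst j]
  · rw [hint _ hf, hsnd]
    exact Finset.sum_congr rfl fun i hi => by rw [hz2 i hi]

end Aux

/-- Strong duality for the inner moment problem: maximizing `∫_S f dP` over
probability measures `P` supported on a compact set `S ⊆ ℝⁿ` with first moments
in `[μ_j − ε_j, μ_j + ε_j]`, for continuous `f`, equals the optimal value of the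
semi-infinite dual with multipliers `α ∈ ℝ` and `β¹, β² ≥ 0`, under a
Slater-type condition (`ε > 0`, `μ ∈ int(conv S)`, and feasibility). -/
theorem moment_problem_strong_duality {n : ℕ} (S : Set (Fin n → ℝ))
    (hScompact : IsCompact S) (hSne : S.Nonempty)
    (f : (Fin n → ℝ) → ℝ) (hf : Continuous f)
    (μ ε : Fin n → ℝ) (hε : ∀ j, 0 < ε j)
    (hslater : μ ∈ interior (convexHull ℝ S))
    (hfeas : ∃ P : Measure (Fin n → ℝ), IsProbabilityMeasure P ∧ P Sᶜ = 0 ∧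
      ∀ j : Fin n, μ j - ε j ≤ ∫ ξ, ξ j ∂P ∧ ∫ ξ, ξ j ∂P ≤ μ j + ε j) :
    sSup {v : ℝ | ∃ P : Measure (Fin n → ℝ), IsProbabilityMeasure P ∧ P Sᶜ = 0 ∧
        (∀ j : Fin n, μ j - ε j ≤ ∫ ξ, ξ j ∂P ∧ ∫ ξ, ξ j ∂P ≤ μ j + ε j) ∧
        v = ∫ ξ, f ξ ∂P}
    = sInf {v : ℝ | ∃ (α : ℝ) (β1 β2 : Fin n → ℝ), 0 ≤ β1 ∧ 0 ≤ β2 ∧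
        (∀ ξ ∈ S, f ξ ≤ α + ∑ j, (β1 j - β2 j) * ξ j) ∧
        v = α + ∑ j, (β1 j * (μ j + ε j) - β2 j * (μ j - ε j))} := by
  set V : Set ℝ := {v : ℝ | ∃ P : Measure (Fin n → ℝ), IsProbabilityMeasure P ∧ P Sᶜ = 0 ∧
        (∀ j : Fin n, μ j - ε j ≤ ∫ ξ, ξ j ∂P ∧ ∫ ξ, ξ j ∂P ≤ μ j + ε j) ∧
        v = ∫ ξ, f ξ ∂P} with hVdef
  set W : Set ℝ := {v : ℝ | ∃ (α : ℝ) (β1 β2 : Fin n → ℝ), 0 ≤ β1 ∧ 0 ≤ β2 ∧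
        (∀ ξ ∈ S, f ξ ≤ α + ∑ j, (β1 j - β2 j) * ξ j) ∧
        v = α + ∑ j, (β1 j * (μ j + ε j) - β2 j * (μ j - ε j))} with hWdef
  -- weak duality
  have hweak : ∀ v ∈ V, ∀ w ∈ W, v ≤ w := by
    rintro v ⟨P, hPprob, hP0, hPm, rfl⟩ w ⟨α, β1, β2, hβ1, hβ2, hcon, rfl⟩
    have hint : ∀ j : Fin n, Integrable (fun ξ : Fin n → ℝ => ξ j) P :=
      fun j => aux_integrable hScompact hP0 (continuous_apply j)
    have hintg : Integrable (fun ξ : Fin n → ℝ =>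
        α + ∑ j, (β1 j - β2 j) * ξ j) P := by
      refine (integrable_const α).add (integrable_finset_sum _ fun j _ => ?_)
      exact (hint j).const_mul _
    have h1 : ∫ ξ, f ξ ∂P ≤ ∫ ξ, (α + ∑ j, (β1 j - β2 j) * ξ j) ∂P := by
      refine integral_mono_ae (aux_integrable hScompact hP0 hf) hintg ?_
      rw [Filter.EventuallyLE, Filter.eventually_iff, mem_ae_iff]
      refine measure_mono_null (fun x hx => ?_) hP0
      intro hxS
      exact hx (hcon x hxS)
    have h2 : ∫ ξ, (α + ∑ j, (β1 j - β2 j) * ξ j) ∂P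
        = α + ∑ j, (β1 j - β2 j) * ∫ ξ, ξ j ∂P := by
      rw [integral_add (integrable_const α)
        (integrable_finset_sum _ fun j _ => (hint j).const_mul _),
        integral_const, integral_finset_sum _ fun j _ => (hint j).const_mul _]
      simp only [measure_univ, probReal_univ, ENNReal.toReal_one, smul_eq_mul, one_mul]
      congr 1
      exact Finset.sum_congr rfl fun j _ => integral_const_mul (μ := P) (β1 j - β2 j) (fun ξ : Fin n → ℝ => ξ j)
    refine (h1.trans_eq h2).trans (add_le_add_right (Finset.sum_le_sum fun j _ => ?_) α)
    have hm := hPm j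
    have h1j : (0:ℝ) ≤ β1 j := hβ1 j
    have h2j : (0:ℝ) ≤ β2 j := hβ2 j
    nlinarith [hm.1, hm.2]
  -- dual feasibility
  obtain ⟨x₀, hx₀S, hx₀max⟩ := hScompact.exists_isMaxOn hSne hf.continuousOn
  have hWne : W.Nonempty := by
    refine ⟨f x₀ + ∑ j, ((0:ℝ) * (μ j + ε j) - 0 * (μ j - ε j)), f x₀, 0, 0, le_rfl, le_rfl,
      ?_, by simp⟩
    intro ξ hξ
    simpa using hx₀max hξ
  obtain ⟨w₁, hw₁W⟩ := hWne
  -- primal feasibility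
  obtain ⟨P₀, hP₀prob, hP₀0, hP₀m⟩ := hfeas
  have hVne : V.Nonempty := ⟨∫ ξ, f ξ ∂P₀, P₀, hP₀prob, hP₀0, hP₀m, rfl⟩
  have hVbdd : BddAbove V := ⟨w₁, fun v hv => hweak v hv w₁ hw₁W⟩
  obtain ⟨v₁, hv₁V⟩ := hVne
  have hWbdd : BddBelow W := ⟨v₁, fun w hw => hweak v₁ hv₁V w hw⟩
  set vstar : ℝ := sSup V with hvstar
  -- the separation setup
  set G : Set ((Fin n → ℝ) × ℝ) := (fun ξ => (ξ, f ξ)) '' S with hGdef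
  set C : Set ((Fin n → ℝ) × ℝ) := convexHull ℝ G with hCdef
  set D : Set ((Fin n → ℝ) × ℝ) :=
    {p | (∀ j, |p.1 j - μ j| < ε j) ∧ vstar < p.2} with hDdef
  have hDopen : IsOpen D := by
    rw [hDdef, Set.setOf_and]
    refine IsOpen.inter ?_ (isOpen_lt continuous_const continuous_snd)
    rw [Set.setOf_forall]
    refine isOpen_iInter_of_finite fun j => ?_
    exact isOpen_lt (Continuous.abs (((continuous_apply j).comp continuous_fst).sub
      continuous_const)) continuous_const
  have hDconvex : Convex ℝ D := by
    rintro p ⟨hp1, hp2⟩ q ⟨hq1, hq2⟩ a b ha hb hab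
    constructor
    · intro j
      have hc : (a • p + b • q).1 j - μ j
          = a * (p.1 j - μ j) + b * (q.1 j - μ j) := by
        simp only [Prod.fst_add, Prod.smul_fst, Pi.add_apply, Pi.smul_apply, smul_eq_mul]
        linear_combination (μ j) * hab
      rw [hc]
      exact aux_abs_comb (hp1 j) (hq1 j) ha hb hab
    · have hc : (a • p + b • q).2 = a * p.2 + b * q.2 := by
        simp [Prod.snd_add, Prod.smul_snd, smul_eq_mul]
      rw [hc]
      exact aux_lt_comb hp2 hq2 ha hb hab
  have hdisj : Disjoint D C := by
    rw [Set.disjoint_left]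
    rintro p ⟨hp1, hp2⟩ hpC
    obtain ⟨P, hPprob, hP0, hPm, hPf⟩ := aux_comb hScompact hf hpC
    have hpV : p.2 ∈ V := by
      refine ⟨P, hPprob, hP0, fun j => ?_, hPf.symm⟩
      rw [hPm j]
      have := abs_lt.mp (hp1 j)
      constructor <;> linarith [this.1, this.2]
    exact absurd (le_csSup hVbdd hpV) (not_le.mpr hp2)
  obtain ⟨φ, u, hφD, hφC⟩ :=
    geometric_hahn_banach_open hDconvex hDopen (convex_convexHull ℝ G) hdisj
  set c : Fin n → ℝ := fun j => φ (Pi.single j 1, 0) with hcdef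
  set γ : ℝ := φ (0, 1) with hγdef
  have hsingle : ∀ m : Fin n → ℝ, ∀ j,
      m j • (Pi.single j 1 : Fin n → ℝ) = Pi.single j (m j) := by
    intro m j
    rw [← Pi.single_smul, smul_eq_mul, mul_one]
  have hdecomp : ∀ (m : Fin n → ℝ) (s : ℝ),
      φ (m, s) = (∑ j, c j * m j) + γ * s := by
    intro m s
    have h1 : ((m, s) : (Fin n → ℝ) × ℝ)
        = (∑ j, m j • ((Pi.single j 1 : Fin n → ℝ), (0:ℝ))) + s • ((0 : Fin n → ℝ), (1:ℝ)) := by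
      refine Prod.ext ?_ ?_
      · simp only [Prod.fst_add, Prod.fst_sum, Prod.smul_fst, Prod.smul_snd, smul_zero, add_zero]
        rw [show (∑ j, m j • (Pi.single j 1 : Fin n → ℝ)) = m from by
          rw [Finset.sum_congr rfl fun j _ => hsingle m j, Finset.univ_sum_single]]
      · simp [Prod.snd_sum]
    rw [h1, map_add, map_sum, φ.map_smul, smul_eq_mul]
    have h2 : ∀ j : Fin n,
        φ (m j • ((Pi.single j 1 : Fin n → ℝ), (0:ℝ))) = c j * m j := by
      intro j
      rw [φ.map_smul, smul_eq_mul, mul_comm]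
    rw [Finset.sum_congr rfl fun j _ => h2 j]
    congr 1
    exact mul_comm s γ
  have hμbox : ∀ j, |μ j - μ j| < ε j := fun j => by simpa using hε j
  have hγneg : γ < 0 := by
    rcases lt_trichotomy γ 0 with h | h | h
    · exact h
    · exfalso
      have hμconv : μ ∈ convexHull ℝ S := interior_subset hslater
      have himg : (LinearMap.fst ℝ (Fin n → ℝ) ℝ) '' C = convexHull ℝ S := by
        rw [hCdef, LinearMap.image_convexHull, hGdef, Set.image_image]
        simp
      rw [← himg] at hμconv
      obtain ⟨q, hqC, hq1⟩ := hμconv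
      have h1 : u ≤ φ q := hφC q hqC
      have h2 : φ (μ, vstar + 1) < u := hφD _ ⟨hμbox, lt_add_one vstar⟩
      have hq1' : q.1 = μ := hq1
      have h3 : φ q = ∑ j, c j * μ j := by
        have h4 := hdecomp q.1 q.2
        rw [Prod.mk.eta] at h4
        rw [h4, hq1', h]
        ring
      rw [hdecomp, h] at h2
      simp only [zero_mul, add_zero] at h2
      rw [h3] at h1
      linarith
    · exfalso
      set T : ℝ := max (vstar + 1) ((u - ∑ j, c j * μ j) / γ) with hTdef
      have hT1 : vstar < T := lt_of_lt_of_le (lt_add_one _) (le_max_left _ _)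
      have h2 : φ (μ, T) < u := hφD _ ⟨hμbox, hT1⟩
      rw [hdecomp] at h2
      have h3 : γ * ((u - ∑ j, c j * μ j) / γ) ≤ γ * T :=
        mul_le_mul_of_nonneg_left (le_max_right _ _) h.le
      rw [mul_div_cancel₀ _ h.ne'] at h3
      linarith
  set g : ℝ := -γ with hgdef
  have hg : 0 < g := by rw [hgdef]; linarith
  have hg0 : g ≠ 0 := ne_of_gt hg
  set b : Fin n → ℝ := fun j => c j / g with hbdef
  have hcb : ∀ j, c j = g * b j := by
    intro j
    simp only [hbdef]
    field_simp
  set α : ℝ := -u / g with hαdef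
  have hgα : g * α = -u := by
    rw [hαdef, mul_comm, div_mul_cancel₀ _ hg0]
  set β1 : Fin n → ℝ := fun j => max (b j) 0 with hβ1def
  set β2 : Fin n → ℝ := fun j => max (-(b j)) 0 with hβ2def
  have hβ1nn : (0 : Fin n → ℝ) ≤ β1 := fun j => le_max_right _ _
  have hβ2nn : (0 : Fin n → ℝ) ≤ β2 := fun j => le_max_right _ _
  have hbsub : ∀ j, β1 j - β2 j = b j := by
    intro j
    simp only [hβ1def, hβ2def]
    rcases le_total (b j) 0 with h | h
    · rw [max_eq_right h, max_eq_left (by linarith)]; ring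
    · rw [max_eq_left h, max_eq_right (by linarith)]; ring
  have hbabs : ∀ j, β1 j + β2 j = |b j| := by
    intro j
    simp only [hβ1def, hβ2def]
    rcases le_total (b j) 0 with h | h
    · rw [max_eq_right h, max_eq_left (by linarith), abs_of_nonpos h]; ring
    · rw [max_eq_left h, max_eq_right (by linarith), abs_of_nonneg h]; ring
  -- dual constraint
  have hcon : ∀ ξ ∈ S, f ξ ≤ α + ∑ j, (β1 j - β2 j) * ξ j := by
    intro ξ hξ
    have h1 : u ≤ φ (ξ, f ξ) := hφC _ (subset_convexHull ℝ G ⟨ξ, hξ, rfl⟩)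
    rw [hdecomp] at h1
    have h2 : (∑ j, c j * ξ j) = g * ∑ j, b j * ξ j := by
      rw [Finset.mul_sum]
      exact Finset.sum_congr rfl fun j _ => by rw [hcb j]; ring
    rw [h2] at h1
    have h3 : ∑ j, (β1 j - β2 j) * ξ j = ∑ j, b j * ξ j :=
      Finset.sum_congr rfl fun j _ => by rw [hbsub j]
    rw [h3]
    have hγg : γ = -g := by rw [hgdef]; ring
    rw [hγg] at h1
    -- u ≤ g * ∑ b ξ - g * f ξ
    have h5 : g * (α + ∑ j, b j * ξ j) = -u + g * ∑ j, b j * ξ j := by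
      rw [mul_add, hgα]
    have h4 : g * f ξ ≤ g * (α + ∑ j, b j * ξ j) := by
      rw [h5]
      linarith
    exact le_of_mul_le_mul_left h4 hg
  set A : ℝ := α + ∑ j, b j * μ j with hAdef
  set sB : ℝ := ∑ j, ε j * |b j| with hsBdef
  have hsBnn : 0 ≤ sB := by
    rw [hsBdef]
    exact Finset.sum_nonneg fun j _ => mul_nonneg (hε j).le (abs_nonneg _)
  -- the dual value
  set w₀ : ℝ := α + ∑ j, (β1 j * (μ j + ε j) - β2 j * (μ j - ε j)) with hw₀def
  have hw₀W : w₀ ∈ W := ⟨α, β1, β2, hβ1nn, hβ2nn, hcon, rfl⟩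
  have hw₀eq : w₀ = A + sB := by
    rw [hw₀def, hAdef, hsBdef, add_assoc, ← Finset.sum_add_distrib]
    congr 1
    refine Finset.sum_congr rfl fun j _ => ?_
    have h1 := hbsub j
    have h2 := hbabs j
    linear_combination (μ j) * h1 + (ε j) * h2
  -- key estimate from the separation
  have hδ : ∀ δ : ℝ, 0 ≤ δ → δ < 1 → A + δ * sB ≤ vstar := by
    intro δ h0 h1
    set sgn : Fin n → ℝ := fun j => if 0 ≤ b j then 1 else -1 with hsgndef
    have hsgnabs : ∀ j, |sgn j| = 1 := by
      intro j; rw [hsgndef]; dsimp only; split_ifs <;> norm_num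
    have hsgnmul : ∀ j, b j * sgn j = |b j| := by
      intro j; rw [hsgndef]; dsimp only; split_ifs with h
      · rw [abs_of_nonneg h, mul_one]
      · rw [abs_of_neg (not_le.mp h)]; ring
    set m : Fin n → ℝ := fun j => μ j + δ * (ε j * sgn j) with hmdef
    have hm : ∀ j, |m j - μ j| < ε j := by
      intro j
      rw [hmdef]
      dsimp only
      rw [add_sub_cancel_left, abs_mul, abs_mul, hsgnabs j, mul_one, abs_of_nonneg h0,
        abs_of_pos (hε j)]
      calc δ * ε j < 1 * ε j := mul_lt_mul_of_pos_right h1 (hε j)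
        _ = ε j := one_mul _
    have hkey : ∀ η : ℝ, 0 < η → A + δ * sB ≤ vstar + η := by
      intro η hη
      have hmem : ((m, vstar + η) : (Fin n → ℝ) × ℝ) ∈ D :=
        ⟨hm, lt_add_of_pos_right vstar hη⟩
      have h2 := hφD _ hmem
      rw [hdecomp] at h2
      have h3 : (∑ j, c j * m j) = g * (∑ j, b j * μ j) + δ * (g * sB) := by
        rw [hsBdef, Finset.mul_sum, Finset.mul_sum, Finset.mul_sum, ← Finset.sum_add_distrib]
        refine Finset.sum_congr rfl fun j _ => ?_
        rw [hmdef]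
        dsimp only
        rw [hcb j]
        have h5 := hsgnmul j
        linear_combination (δ * g * ε j) * h5
      rw [h3] at h2
      have hγg : γ = -g := by rw [hgdef]; ring
      rw [hγg] at h2
      -- h2 : g * ∑ bμ + δ * (g * sB) + (-g) * (vstar + η) < u
      have hA2 : g * A = -u + g * (∑ j, b j * μ j) := by rw [hAdef, mul_add, hgα]
      have h6 : g * (A + δ * sB) = -u + g * (∑ j, b j * μ j) + δ * (g * sB) := by
        rw [mul_add, hA2]; ring
      have h4 : g * (A + δ * sB) < g * (vstar + η) := by
        rw [h6]
        nlinarith [h2]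
      exact (le_of_mul_le_mul_left h4.le hg)
    exact le_of_forall_pos_le_add hkey
  have hw₀le : w₀ ≤ vstar := by
    rw [hw₀eq]
    by_contra hlt
    push_neg at hlt
    have hA : A ≤ vstar := by simpa using hδ 0 le_rfl one_pos
    have hsBpos : 0 < sB := by nlinarith
    set δ0 : ℝ := (vstar - A) / sB with hδ0def
    have hδ00 : 0 ≤ δ0 := div_nonneg (by linarith) hsBpos.le
    have hδ01 : δ0 < 1 := (div_lt_one hsBpos).mpr (by linarith)
    have hδ0mul : δ0 * sB = vstar - A := by
      rw [hδ0def]; field_simp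
    have h1 := hδ ((δ0 + 1) / 2) (by linarith) (by linarith)
    nlinarith [h1, hδ0mul]
  refine le_antisymm ?_ ?_
  · exact csSup_le ⟨v₁, hv₁V⟩ fun v hv => le_csInf ⟨w₁, hw₁W⟩ fun w hw => hweak v hv w hw
  · exact (csInf_le hWbdd hw₀W).trans hw₀le
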